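/- Let A be an irreducible n×n real stochastic matrix of period t, with surjective periodic partition P : {1,…,n} → ℤ/tℤ (A_{ij} > 0 implies P(j) = P(i) + 1), where t is the exact period in the sense that there exists m ≥ 1 such that (A^{mt})_{ij} > 0 whenever P(i) = P(j). Then every n×n symmetric matrix X with nonnegative entries satisfying A X Aᵀ = X is a linear combination with nonnegative coefficients of the indicator matrices X^{(δ)}: there exist reals c_δ ≥ 0, for δ = 0, 1, …, ⌊t/2⌋, such that X = Σ_δ c_δ X^{(δ)}. -/
import Mathlib


open Matrix BigOperators

/-- The circular distance between the periodic classes of `i` and `j`: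
`min (a, t - a)` where `a ∈ {0, …, t-1}` represents `P j - P i` in `ℤ/tℤ`. -/
def cdist {n t : ℕ} (P : Fin n → ZMod t) (i j : Fin n) : ℕ :=
  min (P j - P i).val (t - (P j - P i).val)

/-- The 0-1 indicator matrix `X⁽δ⁾` of the relation `dist(i,j) = δ`. -/
def indMat {n t : ℕ} (P : Fin n → ZMod t) (δ : ℕ) : Matrix (Fin n) (Fin n) ℝ :=
  Matrix.of fun i j => if cdist P i j = δ then 1 else 0

/-- For an irreducible stochastic matrix `A` of exact period `t` with periodic
partition `P`, every nonnegative symmetric solution of `A X Aᵀ = X` is a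
nonnegative linear combination of the distance indicator matrices `X⁽δ⁾`,
`δ = 0, 1, …, ⌊t/2⌋`. -/
theorem level2_solutions_span {n t : ℕ} (ht : 1 ≤ t)
    (A : Matrix (Fin n) (Fin n) ℝ)
    (hAnn : ∀ i j, 0 ≤ A i j) (hrow : ∀ i, ∑ j, A i j = 1)
    (hirr : ∀ i j, ∃ m : ℕ, 1 ≤ m ∧ 0 < (A ^ m) i j)
    (P : Fin n → ZMod t) (hPsurj : Function.Surjective P)
    (hP : ∀ i j, 0 < A i j → P j = P i + 1)
    (hexact : ∃ m : ℕ, 1 ≤ m ∧ ∀ i j, P i = P j → 0 < (A ^ (m * t)) i j)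
    (X : Matrix (Fin n) (Fin n) ℝ) (hsym : X.IsSymm)
    (hXnn : ∀ i j, 0 ≤ X i j)
    (hfix : A * X * Aᵀ = X) :
    ∃ c : ℕ → ℝ, (∀ δ, 0 ≤ c δ) ∧
      X = ∑ δ ∈ Finset.range (t / 2 + 1), c δ • indMat P δ := by
  haveI : NeZero t := ⟨by omega⟩
  classical
  -- nonnegativity of powers
  have hpow_nn : ∀ s : ℕ, ∀ i j, 0 ≤ (A ^ s) i j := by
    intro s
    induction s with
    | zero =>
      intro i j
      simp only [pow_zero, Matrix.one_apply]
      split <;> norm_num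
    | succ s ih =>
      intro i j
      rw [pow_succ, Matrix.mul_apply]
      exact Finset.sum_nonneg fun k _ => mul_nonneg (ih i k) (hAnn k j)
  -- row sums of powers
  have hpow_row : ∀ s : ℕ, ∀ i, ∑ j, (A ^ s) i j = 1 := by
    intro s
    induction s with
    | zero => intro i; simp [Matrix.one_apply]
    | succ s ih =>
      intro i
      simp only [pow_succ, Matrix.mul_apply]
      rw [Finset.sum_comm]
      calc ∑ k, ∑ j, (A ^ s) i k * A k j
          = ∑ k, (A ^ s) i k * ∑ j, A k j := by
            exact Finset.sum_congr rfl fun k _ => (Finset.mul_sum _ _ _).symm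
        _ = 1 := by simp only [hrow, mul_one]; exact ih i
  -- support of powers
  have hsupp : ∀ s : ℕ, ∀ i j, 0 < (A ^ s) i j → P j = P i + (s : ZMod t) := by
    intro s
    induction s with
    | zero =>
      intro i j h
      simp only [pow_zero, Matrix.one_apply] at h
      by_cases hij : i = j
      · subst hij; simp
      · simp [hij] at h
    | succ s ih =>
      intro i j h
      rw [pow_succ, Matrix.mul_apply] at h
      have hex : ∃ k, 0 < (A ^ s) i k * A k j := by
        by_contra hc
        push_neg at hc
        have := Finset.sum_nonpos (fun k (_ : k ∈ Finset.univ) => hc k)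
        linarith
      obtain ⟨k, hk⟩ := hex
      have h1 : 0 < (A ^ s) i k := by
        rcases (hpow_nn s i k).lt_or_eq with h1 | h1
        · exact h1
        · rw [← h1, zero_mul] at hk; exact absurd hk (lt_irrefl 0)
      have h2 : 0 < A k j := by
        rcases (hAnn k j).lt_or_eq with h2 | h2
        · exact h2
        · rw [← h2, mul_zero] at hk; exact absurd hk (lt_irrefl 0)
      have e1 := ih i k h1
      have e2 := hP k j h2
      rw [e2, e1]
      push_cast
      ring
  -- fixed point for all powers
  have hfixpow : ∀ s : ℕ, A ^ s * X * (A ^ s)ᵀ = X := by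
    intro s
    induction s with
    | zero => simp
    | succ s ih =>
      have hps : A ^ (s + 1) = A * A ^ s := by rw [pow_succ']
      rw [hps, Matrix.transpose_mul]
      calc A * A ^ s * X * ((A ^ s)ᵀ * Aᵀ)
          = A * (A ^ s * X * (A ^ s)ᵀ) * Aᵀ := by
            simp only [Matrix.mul_assoc]
        _ = X := by rw [ih, hfix]
  -- entrywise formula
  have hentry : ∀ s : ℕ, ∀ i j, X i j = ∑ k, ∑ l, (A ^ s) i k * (A ^ s) j l * X k l := by
    intro s i j
    conv_lhs => rw [← hfixpow s]
    simp only [Matrix.mul_apply, Matrix.transpose_apply, Finset.sum_mul]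
    rw [Finset.sum_comm]
    exact Finset.sum_congr rfl fun k _ => Finset.sum_congr rfl fun l _ => by ring
  -- double stochastic-sum helper
  have hds : ∀ (B : Matrix (Fin n) (Fin n) ℝ), (∀ i, ∑ j, B i j = 1) →
      ∀ (i j : Fin n) (C : ℝ), ∑ k, ∑ l, B i k * B j l * C = C := by
    intro B hB i j C
    have hin : ∀ k, ∑ l, B i k * B j l * C = B i k * C := by
      intro k
      calc ∑ l, B i k * B j l * C = (B i k * C) * ∑ l, B j l := by
            rw [Finset.mul_sum]
            exact Finset.sum_congr rfl fun l _ => by ring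
        _ = B i k * C := by rw [hB, mul_one]
    rw [Finset.sum_congr rfl fun k _ => hin k, ← Finset.sum_mul, hB, one_mul]
  obtain ⟨m, hm1, hmpos⟩ := hexact
  set B := A ^ (m * t) with hBdef
  have hBnn : ∀ i j, 0 ≤ B i j := hpow_nn _
  have hBrow : ∀ i, ∑ j, B i j = 1 := hpow_row _
  have hBsupp : ∀ i j, 0 < B i j → P j = P i := by
    intro i j h
    have := hsupp (m * t) i j h
    rw [this]
    push_cast
    rw [ZMod.natCast_self]
    ring
  -- X constant on classes
  have hconst : ∀ i j k l, P k = P i → P l = P j → X i j = X k l := by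
    intro i j k l hk hl
    set S : Finset (Fin n × Fin n) :=
      Finset.univ.filter (fun p => P p.1 = P i ∧ P p.2 = P j) with hS
    have hSne : S.Nonempty := ⟨(i, j), by simp [hS]⟩
    obtain ⟨b, hbS, hmax⟩ := Finset.exists_max_image S (fun p => X p.1 p.2) hSne
    obtain ⟨hb1, hb2⟩ : P b.1 = P i ∧ P b.2 = P j := by
      simpa [hS] using hbS
    set g : Fin n → Fin n → ℝ :=
      fun k' l' => B b.1 k' * B b.2 l' * (X b.1 b.2 - X k' l') with hg
    have hgnn : ∀ k' l', 0 ≤ g k' l' := by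
      intro k' l'
      rcases (hBnn b.1 k').lt_or_eq with h1 | h1
      · rcases (hBnn b.2 l').lt_or_eq with h2 | h2
        · have hk' : P k' = P i := (hBsupp _ _ h1).trans hb1
          have hl' : P l' = P j := (hBsupp _ _ h2).trans hb2
          have hle : X k' l' ≤ X b.1 b.2 := hmax (k', l') (by simp [hS, hk', hl'])
          exact mul_nonneg (mul_nonneg h1.le h2.le) (sub_nonneg.mpr hle)
        · simp only [hg]
          rw [← h2, mul_zero, zero_mul]
      · simp only [hg]
        rw [← h1, zero_mul, zero_mul]
    have hsum0 : ∑ k', ∑ l', g k' l' = 0 := by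
      have h1 : ∑ k', ∑ l', g k' l'
          = (∑ k', ∑ l', B b.1 k' * B b.2 l' * X b.1 b.2)
            - (∑ k', ∑ l', B b.1 k' * B b.2 l' * X k' l') := by
        rw [← Finset.sum_sub_distrib]
        refine Finset.sum_congr rfl fun k' _ => ?_
        rw [← Finset.sum_sub_distrib]
        exact Finset.sum_congr rfl fun l' _ => by simp [hg]; ring
      rw [h1, hds B hBrow, ← hentry, sub_self]
    have hzero : ∀ k' l', g k' l' = 0 := by
      have houter := (Finset.sum_eq_zero_iff_of_nonneg
        (fun k' (_ : k' ∈ Finset.univ) =>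
          Finset.sum_nonneg fun l' _ => hgnn k' l')).mp hsum0
      intro k' l'
      have hinner := (Finset.sum_eq_zero_iff_of_nonneg
        (fun l' (_ : l' ∈ Finset.univ) => hgnn k' l')).mp (houter k' (Finset.mem_univ k'))
      exact hinner l' (Finset.mem_univ l')
    have claim : ∀ k' l', P k' = P i → P l' = P j → X k' l' = X b.1 b.2 := by
      intro k' l' hk' hl'
      have hw1 : 0 < B b.1 k' := hmpos b.1 k' (by rw [hb1, hk'])
      have hw2 : 0 < B b.2 l' := hmpos b.2 l' (by rw [hb2, hl'])
      have := hzero k' l'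
      simp only [hg] at this
      rcases mul_eq_zero.mp this with h | h
      · rcases mul_eq_zero.mp h with h' | h'
        · exact absurd h' hw1.ne'
        · exact absurd h' hw2.ne'
      · linarith [sub_eq_zero.mp h]
    rw [claim i j rfl rfl, claim k l hk hl]
  -- one-step shift
  have hshift : ∀ i j k l, P k = P i + 1 → P l = P j + 1 → X i j = X k l := by
    intro i j k l hk hl
    have h1 := hentry 1 i j
    simp only [pow_one] at h1
    have h2 : ∀ k' l', A i k' * A j l' * X k' l' = A i k' * A j l' * X k l := by
      intro k' l'
      rcases (hAnn i k').lt_or_eq with ha | ha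
      · rcases (hAnn j l').lt_or_eq with hb' | hb'
        · have e1 : P k = P k' := by rw [hP i k' ha, hk]
          have e2 : P l = P l' := by rw [hP j l' hb', hl]
          rw [hconst k' l' k l e1 e2]
        · rw [← hb']; ring
      · rw [← ha]; ring
    rw [h1, Finset.sum_congr rfl fun k' _ => Finset.sum_congr rfl fun l' _ => h2 k' l']
    exact hds A hrow i j (X k l)
  -- s-step shift
  have hshiftn : ∀ s : ℕ, ∀ i j k l,
      P k = P i + (s : ZMod t) → P l = P j + (s : ZMod t) → X i j = X k l := by
    intro s
    induction s with
    | zero =>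
      intro i j k l hk hl
      simp only [Nat.cast_zero, add_zero] at hk hl
      exact hconst i j k l hk hl
    | succ s ih =>
      intro i j k l hk hl
      obtain ⟨i', hi'⟩ := hPsurj (P i + (s : ZMod t))
      obtain ⟨j', hj'⟩ := hPsurj (P j + (s : ZMod t))
      push_cast at hk hl
      refine (ih i j i' j' hi' hj').trans (hshift i' j' k l ?_ ?_)
      · rw [hk, hi']; ring
      · rw [hl, hj']; ring
  -- diagonal invariance
  have hdiag : ∀ i j k l, P l - P k = P j - P i → X i j = X k l := by
    intro i j k l hd
    have hcast : ((P k - P i).val : ZMod t) = P k - P i := by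
      rw [ZMod.natCast_val, ZMod.cast_id]
    apply hshiftn (P k - P i).val i j k l
    · rw [hcast]; ring
    · rw [hcast]; linear_combination hd
  have hXsym : ∀ i j, X j i = X i j := fun i j => hsym.apply i j
  -- the key lemma
  have hkey : ∀ i j k l, cdist P i j = cdist P k l → X i j = X k l := by
    intro i j k l hd
    unfold cdist at hd
    set a := (P j - P i).val with ha
    set b' := (P l - P k).val with hb'
    have hat : a < t := ZMod.val_lt _
    have hbt : b' < t := ZMod.val_lt _
    have hca : ((a : ℕ) : ZMod t) = P j - P i := by rw [ha, ZMod.natCast_val, ZMod.cast_id]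
    have hcb : ((b' : ℕ) : ZMod t) = P l - P k := by rw [hb', ZMod.natCast_val, ZMod.cast_id]
    have hcases : b' = a ∨ b' = t - a := by omega
    rcases hcases with h | h
    · apply hdiag
      rw [← hcb, h, hca]
    · have hneg : P l - P k = P i - P j := by
        rw [← hcb, h]
        have h2 : ((t - a : ℕ) : ZMod t) = -(a : ZMod t) := by
          rw [Nat.cast_sub hat.le, ZMod.natCast_self, zero_sub]
        rw [h2, hca]
        ring
      rw [← hXsym i j]
      exact hdiag j i k l hneg
  -- construct the coefficients
  choose rep hrep using hPsurj
  refine ⟨fun δ => X (rep 0) (rep ((δ : ℕ) : ZMod t)), fun δ => hXnn _ _, ?_⟩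
  ext i j
  rw [Matrix.sum_apply]
  simp only [Matrix.smul_apply, indMat, Matrix.of_apply, smul_eq_mul]
  set δ0 := cdist P i j with hδ0
  have hat : (P j - P i).val < t := ZMod.val_lt _
  have hδ0le : δ0 ≤ t / 2 := by
    rw [hδ0]
    unfold cdist
    omega
  have hδ0lt : δ0 < t := by omega
  have hcd : cdist P (rep 0) (rep ((δ0 : ℕ) : ZMod t)) = δ0 := by
    unfold cdist
    rw [hrep, hrep, sub_zero, ZMod.val_natCast, Nat.mod_eq_of_lt hδ0lt]
    omega
  rw [Finset.sum_eq_single δ0]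
  · rw [if_pos rfl, mul_one]
    exact hkey i j _ _ hcd.symm
  · intro δ _ hne
    rw [if_neg (fun h => hne h.symm), mul_zero]
  · intro h
    exact absurd (Finset.mem_range.mpr (by omega)) h
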